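/- Let g, h : ℝ^d → ℝ with g differentiable and L-smooth (gradient L-Lipschitz) and h convex, and f = g − h. Let u ∈ ∂h(θᵏ) and let θᵏ⁺¹ minimize θ ↦ g(θ) − ⟨u, θ⟩. Then for every θ ∈ ℝ^d: ⟨∇g(θᵏ) − u, θᵏ − θ⟩ − (L/2)‖θ − θᵏ‖² ≤ f(θᵏ) − f(θᵏ⁺¹). In particular, taking θ = θᵏ − (1/L)(∇g(θᵏ) − u), one obtains (1/(2L))‖∇g(θᵏ) − u‖² ≤ f(θᵏ) − f(θᵏ⁺¹). -/

import Mathlib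

open RealInnerProductSpace

lemma descent_lemma {d : ℕ} (g : EuclideanSpace ℝ (Fin d) → ℝ)
    (g' : EuclideanSpace ℝ (Fin d) → EuclideanSpace ℝ (Fin d))
    (hg' : ∀ x, HasGradientAt g (g' x) x) (L : ℝ) (hL : 0 ≤ L)
    (hLip : ∀ x y, ‖g' x - g' y‖ ≤ L * ‖x - y‖)
    (x y : EuclideanSpace ℝ (Fin d)) :
    g y ≤ g x + ⟪g' x, y - x⟫ + L / 2 * ‖y - x‖ ^ 2 := by
  set v := y - x with hv
  set ψ : ℝ → ℝ := fun t => g (x + t • v) - t * ⟪g' x, v⟫ - L * t ^ 2 / 2 * ‖v‖ ^ 2 with hψ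
  have hline : ∀ t : ℝ, HasDerivAt (fun t : ℝ => x + t • v) v t := by
    intro t
    simpa using ((hasDerivAt_id t).smul_const v).const_add x
  have hder : ∀ t : ℝ, HasDerivAt ψ
      (⟪g' (x + t • v), v⟫ - ⟪g' x, v⟫ - L * t * ‖v‖ ^ 2) t := by
    intro t
    have h1 : HasDerivAt (fun t : ℝ => g (x + t • v)) (⟪g' (x + t • v), v⟫) t := by
      have := ((hg' (x + t • v)).hasFDerivAt.comp_hasDerivAt t (hline t))
      simp [InnerProductSpace.toDual_apply_apply] at this
      exact this
    have h2 : HasDerivAt (fun t : ℝ => t * ⟪g' x, v⟫) (⟪g' x, v⟫) t := by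
      simpa using (hasDerivAt_id t).mul_const (⟪g' x, v⟫ : ℝ)
    have h3 : HasDerivAt (fun t : ℝ => L * t ^ 2 / 2 * ‖v‖ ^ 2) (L * t * ‖v‖ ^ 2) t := by
      have : HasDerivAt (fun t : ℝ => t ^ 2) (2 * t) t := by
        simpa using hasDerivAt_pow 2 t
      have := ((this.const_mul L).div_const 2).mul_const (‖v‖ ^ 2)
      exact this.congr_deriv (by ring)
    exact (h1.sub h2).sub h3
  have hanti : AntitoneOn ψ (Set.Icc 0 1) := by
    apply antitoneOn_of_deriv_nonpos (convex_Icc 0 1)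
    · exact (fun t _ => ((hder t).differentiableAt).continuousAt.continuousWithinAt)
    · exact (fun t _ => ((hder t).differentiableAt).differentiableWithinAt)
    · intro t ht
      rw [(hder t).deriv]
      have hcs : (⟪g' (x + t • v) - g' x, v⟫ : ℝ) ≤ ‖g' (x + t • v) - g' x‖ * ‖v‖ :=
        real_inner_le_norm _ _
      have hlip := hLip (x + t • v) x
      have ht0 : 0 ≤ t := (interior_subset ht).1
      have : ‖g' (x + t • v) - g' x‖ ≤ L * (t * ‖v‖) := by
        simpa [norm_smul, abs_of_nonneg ht0, mul_assoc] using hLip (x + t • v) x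
      nlinarith [inner_sub_left (𝕜 := ℝ) (g' (x + t • v)) (g' x) v, norm_nonneg v,
        norm_nonneg (g' (x + t • v) - g' x), real_inner_le_norm (g' (x + t • v) - g' x) v]
  have h01 : ψ 1 ≤ ψ 0 := hanti (by norm_num) (by norm_num) (by norm_num)
  simp only [hψ] at h01
  simp only [one_smul, zero_smul, add_zero, one_pow, zero_pow, mul_zero, mul_one, zero_mul,
    sub_zero] at h01
  have : x + v = y := by simp [hv]
  rw [this] at h01
  linarith

theorem dca_gap_bound {d : ℕ}
    (g h f : EuclideanSpace ℝ (Fin d) → ℝ)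
    (g' : EuclideanSpace ℝ (Fin d) → EuclideanSpace ℝ (Fin d))
    (hg' : ∀ x, HasGradientAt g (g' x) x)
    (L : ℝ) (hL : 0 < L)
    (hLsmooth : ∀ x y, ‖g' x - g' y‖ ≤ L * ‖x - y‖)
    (hh : ConvexOn ℝ Set.univ h)
    (hf : ∀ x, f x = g x - h x)
    (θk θk1 u : EuclideanSpace ℝ (Fin d))
    (hu : ∀ x, h θk + (⟪u, x - θk⟫ : ℝ) ≤ h x)
    (hmin : ∀ θ, g θk1 - ⟪u, θk1⟫ ≤ g θ - ⟪u, θ⟫) :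
    (∀ θ, (⟪g' θk - u, θk - θ⟫ : ℝ) - (L / 2) * ‖θ - θk‖ ^ 2 ≤ f θk - f θk1) ∧
    (1 / (2 * L)) * ‖g' θk - u‖ ^ 2 ≤ f θk - f θk1 := by
  have key : ∀ θ, (⟪g' θk - u, θk - θ⟫ : ℝ) - (L / 2) * ‖θ - θk‖ ^ 2 ≤ f θk - f θk1 := by
    intro θ
    have hd := descent_lemma g g' hg' L hL.le hLsmooth θk θ
    have hu1 := hu θk1
    have hm := hmin θ
    have e1 : (⟪u, θk1 - θk⟫ : ℝ) = ⟪u, θk1⟫ - ⟪u, θk⟫ := inner_sub_right u θk1 θk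
    have e2 : (⟪g' θk - u, θk - θ⟫ : ℝ)
        = ⟪g' θk, θk - θ⟫ - ⟪u, θk - θ⟫ := inner_sub_left (g' θk) u (θk - θ)
    have e3 : (⟪g' θk, θ - θk⟫ : ℝ) = - ⟪g' θk, θk - θ⟫ := by
      rw [← inner_neg_right]; congr 1; abel
    have e4 : (⟪u, θk - θ⟫ : ℝ) = ⟪u, θk⟫ - ⟪u, θ⟫ := inner_sub_right u θk θ
    rw [hf θk, hf θk1]
    linarith
  refine ⟨key, ?_⟩
  have := key (θk - (1 / L) • (g' θk - u))
  set w := g' θk - u with hw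
  have e1 : θk - (θk - (1 / L) • w) = (1 / L) • w := by abel
  have e2 : θk - (1 / L) • w - θk = -((1 / L) • w) := by abel
  rw [e1, e2] at this
  rw [real_inner_smul_right, real_inner_self_eq_norm_sq, norm_neg, norm_smul] at this
  have hLne : L ≠ 0 := hL.ne'
  have habs : |L| = L := abs_of_pos hL
  have h2 : 1 / L * ‖w‖ ^ 2 - L / 2 * (1 / L * ‖w‖) ^ 2 ≤ f θk - f θk1 := by
    simpa [Real.norm_eq_abs, habs, one_div] using this
  have h3 : 1 / (2 * L) * ‖w‖ ^ 2 = 1 / L * ‖w‖ ^ 2 - L / 2 * (1 / L * ‖w‖) ^ 2 := by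
    field_simp; ring
  linarith
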